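/- arXiv:1708.03747 — 2 statements merged into one kernel-verified Lean document; each statement's English description precedes it below -/
import Mathlib

section
/- For every n ≥ 1 there is a monoid homomorphism φ from the singular braid monoid SB_n to itself satisfying φ(σ_i) = σ_i, φ(σ̄_i) = σ̄_i, and φ(τ_i) = σ_i τ_i for all 1 ≤ i ≤ n−1; that is, the assignment of generators σ_i ↦ σ_i, σ̄_i ↦ σ̄_i, τ_i ↦ σ_i τ_i respects all of the defining relations (Br0), (Br1), (Br2), (BrF). -/
/-- Generators of the singular braid monoid `SB n`: for `i : Fin (n - 1)`,
`sig i` represents `σ_{i+1}`, `sigInv i` represents `σ̄_{i+1}`, and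
`tau i` represents `τ_{i+1}`. -/
inductive SBGen (n : ℕ) : Type
  | sig (i : Fin (n - 1))
  | sigInv (i : Fin (n - 1))
  | tau (i : Fin (n - 1))

namespace SBGen

/-- `σ_i` as a word in the free monoid. -/
def s {n : ℕ} (i : Fin (n - 1)) : FreeMonoid (SBGen n) := FreeMonoid.of (sig i)

/-- `σ̄_i` as a word in the free monoid. -/
def si {n : ℕ} (i : Fin (n - 1)) : FreeMonoid (SBGen n) := FreeMonoid.of (sigInv i)

/-- `τ_i` as a word in the free monoid. -/
def t {n : ℕ} (i : Fin (n - 1)) : FreeMonoid (SBGen n) := FreeMonoid.of (tau i)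

end SBGen

open SBGen in
/-- The defining relations (Br0), (Br1), (Br2), (BrF) of the singular braid monoid. -/
inductive SBRel (n : ℕ) : FreeMonoid (SBGen n) → FreeMonoid (SBGen n) → Prop
  | br0_left (i : Fin (n - 1)) : SBRel n (s i * si i) 1
  | br0_right (i : Fin (n - 1)) : SBRel n (si i * s i) 1
  | br1_ss (i j : Fin (n - 1)) (h : (i : ℕ) + 1 < (j : ℕ) ∨ (j : ℕ) + 1 < (i : ℕ)) :
      SBRel n (s i * s j) (s j * s i)
  | br1_st (i j : Fin (n - 1)) (h : (i : ℕ) + 1 < (j : ℕ) ∨ (j : ℕ) + 1 < (i : ℕ)) :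
      SBRel n (s i * t j) (t j * s i)
  | br1_tt (i j : Fin (n - 1)) (h : (i : ℕ) + 1 < (j : ℕ) ∨ (j : ℕ) + 1 < (i : ℕ)) :
      SBRel n (t i * t j) (t j * t i)
  | br2_ss (i j : Fin (n - 1)) (h : (i : ℕ) + 1 = (j : ℕ) ∨ (j : ℕ) + 1 = (i : ℕ)) :
      SBRel n (s i * s j * s i) (s j * s i * s j)
  | br2_st (i j : Fin (n - 1)) (h : (i : ℕ) + 1 = (j : ℕ) ∨ (j : ℕ) + 1 = (i : ℕ)) :
      SBRel n (s i * s j * t i) (t j * s i * s j)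
  | brF (i : Fin (n - 1)) : SBRel n (s i * t i) (t i * s i)

/-- The singular braid monoid on `n` strands, as a presented monoid. -/
abbrev SB (n : ℕ) := PresentedMonoid (SBRel n)

/-- The generator `σ_i` of `SB n`. -/
def σ {n : ℕ} (i : Fin (n - 1)) : SB n := PresentedMonoid.of (SBRel n) (SBGen.sig i)

/-- The generator `σ̄_i` (the formal inverse of `σ_i`) of `SB n`. -/
def σInv {n : ℕ} (i : Fin (n - 1)) : SB n := PresentedMonoid.of (SBRel n) (SBGen.sigInv i)

/-- The generator `τ_i` of `SB n`. -/
def τ {n : ℕ} (i : Fin (n - 1)) : SB n := PresentedMonoid.of (SBRel n) (SBGen.tau i)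

namespace SBAux

variable {n : ℕ}

lemma mkRel {a b : FreeMonoid (SBGen n)} (h : SBRel n a b) :
    PresentedMonoid.mk (SBRel n) a = PresentedMonoid.mk (SBRel n) b :=
  Quotient.sound (ConGen.Rel.of a b h)

lemma rel_br0_left (i : Fin (n - 1)) : σ i * σInv i = 1 := mkRel (SBRel.br0_left i)

lemma rel_br0_right (i : Fin (n - 1)) : σInv i * σ i = 1 := mkRel (SBRel.br0_right i)

lemma rel_ss (i j : Fin (n - 1)) (h : (i : ℕ) + 1 < (j : ℕ) ∨ (j : ℕ) + 1 < (i : ℕ)) :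
    σ i * σ j = σ j * σ i := mkRel (SBRel.br1_ss i j h)

lemma rel_st (i j : Fin (n - 1)) (h : (i : ℕ) + 1 < (j : ℕ) ∨ (j : ℕ) + 1 < (i : ℕ)) :
    σ i * τ j = τ j * σ i := mkRel (SBRel.br1_st i j h)

lemma rel_tt (i j : Fin (n - 1)) (h : (i : ℕ) + 1 < (j : ℕ) ∨ (j : ℕ) + 1 < (i : ℕ)) :
    τ i * τ j = τ j * τ i := mkRel (SBRel.br1_tt i j h)

lemma rel_ss2 (i j : Fin (n - 1)) (h : (i : ℕ) + 1 = (j : ℕ) ∨ (j : ℕ) + 1 = (i : ℕ)) :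
    σ i * σ j * σ i = σ j * σ i * σ j := mkRel (SBRel.br2_ss i j h)

lemma rel_st2 (i j : Fin (n - 1)) (h : (i : ℕ) + 1 = (j : ℕ) ∨ (j : ℕ) + 1 = (i : ℕ)) :
    σ i * σ j * τ i = τ j * σ i * σ j := mkRel (SBRel.br2_st i j h)

lemma rel_f (i : Fin (n - 1)) : σ i * τ i = τ i * σ i := mkRel (SBRel.brF i)

/-- The image of the generators under the desired endomorphism. -/
def f : SBGen n → SB n
  | SBGen.sig i => σ i
  | SBGen.sigInv i => σInv i
  | SBGen.tau i => σ i * τ i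

lemma f_resp : ∀ a b : FreeMonoid (SBGen n), SBRel n a b →
    FreeMonoid.lift (f (n := n)) a = FreeMonoid.lift (f (n := n)) b := by
  intro a b hab
  induction hab with
  | br0_left i =>
      simp [SBGen.s, SBGen.si, f, rel_br0_left]
  | br0_right i =>
      simp [SBGen.s, SBGen.si, f, rel_br0_right]
  | br1_ss i j h =>
      simp only [SBGen.s, map_mul, FreeMonoid.lift_eval_of, f]
      exact rel_ss i j h
  | br1_st i j h =>
      simp only [SBGen.s, SBGen.t, map_mul, FreeMonoid.lift_eval_of, f]
      calc σ i * (σ j * τ j) = (σ i * σ j) * τ j := by rw [mul_assoc]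
        _ = (σ j * σ i) * τ j := by rw [rel_ss i j h]
        _ = σ j * (σ i * τ j) := by rw [mul_assoc]
        _ = σ j * (τ j * σ i) := by rw [rel_st i j h]
        _ = (σ j * τ j) * σ i := by rw [mul_assoc]
  | br1_tt i j h =>
      simp only [SBGen.t, map_mul, FreeMonoid.lift_eval_of, f]
      calc (σ i * τ i) * (σ j * τ j) = σ i * (τ i * σ j) * τ j := by
            rw [mul_assoc, mul_assoc, mul_assoc]
        _ = σ i * (σ j * τ i) * τ j := by rw [← rel_st j i h.symm]
        _ = (σ i * σ j) * (τ i * τ j) := by rw [mul_assoc, mul_assoc, mul_assoc]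
        _ = (σ j * σ i) * (τ j * τ i) := by rw [rel_ss i j h, rel_tt i j h]
        _ = σ j * (σ i * τ j) * τ i := by rw [mul_assoc, mul_assoc, mul_assoc]
        _ = σ j * (τ j * σ i) * τ i := by rw [rel_st i j h]
        _ = (σ j * τ j) * (σ i * τ i) := by rw [mul_assoc, mul_assoc, mul_assoc]
  | br2_ss i j h =>
      simp only [SBGen.s, map_mul, FreeMonoid.lift_eval_of, f]
      exact rel_ss2 i j h
  | br2_st i j h =>
      simp only [SBGen.s, SBGen.t, map_mul, FreeMonoid.lift_eval_of, f]
      calc σ i * σ j * (σ i * τ i) = σ i * σ j * (τ i * σ i) := by rw [rel_f i]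
        _ = (σ i * σ j * τ i) * σ i := by rw [mul_assoc, mul_assoc, mul_assoc]
        _ = (τ j * σ i * σ j) * σ i := by rw [rel_st2 i j h]
        _ = τ j * (σ i * σ j * σ i) := by rw [mul_assoc, mul_assoc, mul_assoc]
        _ = τ j * (σ j * σ i * σ j) := by rw [rel_ss2 i j h]
        _ = (τ j * σ j) * (σ i * σ j) := by rw [mul_assoc, mul_assoc]
        _ = (σ j * τ j) * (σ i * σ j) := by rw [rel_f j]
  | brF i =>
      simp only [SBGen.s, SBGen.t, map_mul, FreeMonoid.lift_eval_of, f]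
      calc σ i * (σ i * τ i) = σ i * (τ i * σ i) := by rw [rel_f i]
        _ = (σ i * τ i) * σ i := by rw [mul_assoc]

end SBAux

/-- For every `n ≥ 1` there is a monoid homomorphism `φ : SB n →* SB n`
with `φ σ_i = σ_i`, `φ σ̄_i = σ̄_i` and `φ τ_i = σ_i * τ_i` for all generators. -/
theorem SB.exists_endomorphism_tau_to_sigma_mul_tau (n : ℕ) (hn : 1 ≤ n) :
    ∃ φ : SB n →* SB n,
      (∀ i : Fin (n - 1), φ (σ i) = σ i) ∧
      (∀ i : Fin (n - 1), φ (σInv i) = σInv i) ∧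
      (∀ i : Fin (n - 1), φ (τ i) = σ i * τ i) := by
  refine ⟨PresentedMonoid.lift SBAux.f SBAux.f_resp, ?_, ?_, ?_⟩ <;>
    intro i <;> rfl
end

section
/- Let SB_n^ξ be the monoid presented by generators σ_1,…,σ_{n−1}, σ̄_1,…,σ̄_{n−1}, ξ_1,…,ξ_{n−1} subject to the relations obtained from (Br0), (Br1), (Br2), (BrF) by replacing every occurrence of τ_i by ξ_i. Then the assignment σ_i ↦ σ_i, σ̄_i ↦ σ̄_i, ξ_i ↦ σ_i τ_i extends to a monoid isomorphism SB_n^ξ ≅ SB_n. In other words, SB_n admits exactly the same monoid presentation with the elements ξ_i := σ_i τ_i used as generators in place of the τ_i. -/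
/-- Generators of the monoid `SBxi n`: `sig i` is `σ_{i+1}`, `sigInv i` is `σ̄_{i+1}`, and
`xi i` is `ξ_{i+1}`, for `i : Fin (n - 1)`. -/
inductive SBxiGen (n : ℕ) : Type
  | sig (i : Fin (n - 1))
  | sigInv (i : Fin (n - 1))
  | xi (i : Fin (n - 1))

namespace SBxiGen

/-- `σ_i` as a word in the free monoid. -/
def s {n : ℕ} (i : Fin (n - 1)) : FreeMonoid (SBxiGen n) := FreeMonoid.of (sig i)

/-- `σ̄_i` as a word in the free monoid. -/
def si {n : ℕ} (i : Fin (n - 1)) : FreeMonoid (SBxiGen n) := FreeMonoid.of (sigInv i)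

/-- `ξ_i` as a word in the free monoid. -/
def x {n : ℕ} (i : Fin (n - 1)) : FreeMonoid (SBxiGen n) := FreeMonoid.of (xi i)

end SBxiGen

open SBxiGen in
/-- The relations (Br0), (Br1), (Br2), (BrF) with every `τ_i` replaced by `ξ_i`. -/
inductive SBxiRel (n : ℕ) : FreeMonoid (SBxiGen n) → FreeMonoid (SBxiGen n) → Prop
  | br0_left (i : Fin (n - 1)) : SBxiRel n (s i * si i) 1
  | br0_right (i : Fin (n - 1)) : SBxiRel n (si i * s i) 1
  | br1_ss (i j : Fin (n - 1)) (h : (i : ℕ) + 1 < (j : ℕ) ∨ (j : ℕ) + 1 < (i : ℕ)) :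
      SBxiRel n (s i * s j) (s j * s i)
  | br1_sx (i j : Fin (n - 1)) (h : (i : ℕ) + 1 < (j : ℕ) ∨ (j : ℕ) + 1 < (i : ℕ)) :
      SBxiRel n (s i * x j) (x j * s i)
  | br1_xx (i j : Fin (n - 1)) (h : (i : ℕ) + 1 < (j : ℕ) ∨ (j : ℕ) + 1 < (i : ℕ)) :
      SBxiRel n (x i * x j) (x j * x i)
  | br2_ss (i j : Fin (n - 1)) (h : (i : ℕ) + 1 = (j : ℕ) ∨ (j : ℕ) + 1 = (i : ℕ)) :
      SBxiRel n (s i * s j * s i) (s j * s i * s j)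
  | br2_sx (i j : Fin (n - 1)) (h : (i : ℕ) + 1 = (j : ℕ) ∨ (j : ℕ) + 1 = (i : ℕ)) :
      SBxiRel n (s i * s j * x i) (x j * s i * s j)
  | brF (i : Fin (n - 1)) : SBxiRel n (s i * x i) (x i * s i)

/-- The monoid `SB_n^ξ`, presented exactly as `SB n` but with `ξ_i` in place of `τ_i`. -/
abbrev SBxi (n : ℕ) := PresentedMonoid (SBxiRel n)

/-- The generator `σ_i` of `SBxi n`. -/
def ξσ {n : ℕ} (i : Fin (n - 1)) : SBxi n := PresentedMonoid.of (SBxiRel n) (SBxiGen.sig i)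

/-- The generator `σ̄_i` of `SBxi n`. -/
def ξσInv {n : ℕ} (i : Fin (n - 1)) : SBxi n := PresentedMonoid.of (SBxiRel n) (SBxiGen.sigInv i)

/-- The generator `ξ_i` of `SBxi n`. -/
def ξ {n : ℕ} (i : Fin (n - 1)) : SBxi n := PresentedMonoid.of (SBxiRel n) (SBxiGen.xi i)

section Aux

variable {n : ℕ}

/-- Relations hold in `SB n`. -/
theorem SB.rel_eq {a b : FreeMonoid (SBGen n)} (h : SBRel n a b) :
    PresentedMonoid.mk (SBRel n) a = PresentedMonoid.mk (SBRel n) b :=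
  Quotient.sound (ConGen.Rel.of a b h)

theorem SBxi.rel_eq {a b : FreeMonoid (SBxiGen n)} (h : SBxiRel n a b) :
    PresentedMonoid.mk (SBxiRel n) a = PresentedMonoid.mk (SBxiRel n) b :=
  Quotient.sound (ConGen.Rel.of a b h)

-- basic relations in SB n
theorem SB.s0l (i : Fin (n - 1)) : σ i * σInv i = 1 := SB.rel_eq (SBRel.br0_left i)
theorem SB.s0r (i : Fin (n - 1)) : σInv i * σ i = 1 := SB.rel_eq (SBRel.br0_right i)
theorem SB.c_ss {i j : Fin (n - 1)} (h : (i : ℕ) + 1 < (j : ℕ) ∨ (j : ℕ) + 1 < (i : ℕ)) :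
    σ i * σ j = σ j * σ i := SB.rel_eq (SBRel.br1_ss i j h)
theorem SB.c_st {i j : Fin (n - 1)} (h : (i : ℕ) + 1 < (j : ℕ) ∨ (j : ℕ) + 1 < (i : ℕ)) :
    σ i * τ j = τ j * σ i := SB.rel_eq (SBRel.br1_st i j h)
theorem SB.c_tt {i j : Fin (n - 1)} (h : (i : ℕ) + 1 < (j : ℕ) ∨ (j : ℕ) + 1 < (i : ℕ)) :
    τ i * τ j = τ j * τ i := SB.rel_eq (SBRel.br1_tt i j h)
theorem SB.b_ss {i j : Fin (n - 1)} (h : (i : ℕ) + 1 = (j : ℕ) ∨ (j : ℕ) + 1 = (i : ℕ)) :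
    σ i * σ j * σ i = σ j * σ i * σ j := SB.rel_eq (SBRel.br2_ss i j h)
theorem SB.b_st {i j : Fin (n - 1)} (h : (i : ℕ) + 1 = (j : ℕ) ∨ (j : ℕ) + 1 = (i : ℕ)) :
    σ i * σ j * τ i = τ j * σ i * σ j := SB.rel_eq (SBRel.br2_st i j h)
theorem SB.fr (i : Fin (n - 1)) : σ i * τ i = τ i * σ i := SB.rel_eq (SBRel.brF i)

-- basic relations in SBxi n
theorem SBxi.s0l (i : Fin (n - 1)) : ξσ i * ξσInv i = 1 := SBxi.rel_eq (SBxiRel.br0_left i)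
theorem SBxi.s0r (i : Fin (n - 1)) : ξσInv i * ξσ i = 1 := SBxi.rel_eq (SBxiRel.br0_right i)
theorem SBxi.c_ss {i j : Fin (n - 1)} (h : (i : ℕ) + 1 < (j : ℕ) ∨ (j : ℕ) + 1 < (i : ℕ)) :
    ξσ i * ξσ j = ξσ j * ξσ i := SBxi.rel_eq (SBxiRel.br1_ss i j h)
theorem SBxi.c_sx {i j : Fin (n - 1)} (h : (i : ℕ) + 1 < (j : ℕ) ∨ (j : ℕ) + 1 < (i : ℕ)) :
    ξσ i * ξ j = ξ j * ξσ i := SBxi.rel_eq (SBxiRel.br1_sx i j h)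
theorem SBxi.c_xx {i j : Fin (n - 1)} (h : (i : ℕ) + 1 < (j : ℕ) ∨ (j : ℕ) + 1 < (i : ℕ)) :
    ξ i * ξ j = ξ j * ξ i := SBxi.rel_eq (SBxiRel.br1_xx i j h)
theorem SBxi.b_ss {i j : Fin (n - 1)} (h : (i : ℕ) + 1 = (j : ℕ) ∨ (j : ℕ) + 1 = (i : ℕ)) :
    ξσ i * ξσ j * ξσ i = ξσ j * ξσ i * ξσ j := SBxi.rel_eq (SBxiRel.br2_ss i j h)
theorem SBxi.b_sx {i j : Fin (n - 1)} (h : (i : ℕ) + 1 = (j : ℕ) ∨ (j : ℕ) + 1 = (i : ℕ)) :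
    ξσ i * ξσ j * ξ i = ξ j * ξσ i * ξσ j := SBxi.rel_eq (SBxiRel.br2_sx i j h)
theorem SBxi.fr (i : Fin (n - 1)) : ξσ i * ξ i = ξ i * ξσ i := SBxi.rel_eq (SBxiRel.brF i)

-- derived commutations in SBxi
theorem SBxi.c_is {i j : Fin (n - 1)} (h : (i : ℕ) + 1 < (j : ℕ) ∨ (j : ℕ) + 1 < (i : ℕ)) :
    ξσInv i * ξσ j = ξσ j * ξσInv i := by
  have : ξσInv i * (ξσ j * ξσ i) * ξσInv i = ξσInv i * (ξσ i * ξσ j) * ξσInv i := by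
    rw [SBxi.c_ss h]
  calc ξσInv i * ξσ j = ξσInv i * ξσ j * (ξσ i * ξσInv i) := by rw [SBxi.s0l, mul_one]
    _ = ξσInv i * (ξσ j * ξσ i) * ξσInv i := by simp [mul_assoc]
    _ = ξσInv i * (ξσ i * ξσ j) * ξσInv i := this
    _ = (ξσInv i * ξσ i) * (ξσ j * ξσInv i) := by simp [mul_assoc]
    _ = ξσ j * ξσInv i := by rw [SBxi.s0r, one_mul]

theorem SBxi.c_ix {i j : Fin (n - 1)} (h : (i : ℕ) + 1 < (j : ℕ) ∨ (j : ℕ) + 1 < (i : ℕ)) :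
    ξσInv i * ξ j = ξ j * ξσInv i := by
  calc ξσInv i * ξ j = ξσInv i * ξ j * (ξσ i * ξσInv i) := by rw [SBxi.s0l, mul_one]
    _ = ξσInv i * (ξ j * ξσ i) * ξσInv i := by simp [mul_assoc]
    _ = ξσInv i * (ξσ i * ξ j) * ξσInv i := by rw [SBxi.c_sx h]
    _ = (ξσInv i * ξσ i) * (ξ j * ξσInv i) := by simp [mul_assoc]
    _ = ξ j * ξσInv i := by rw [SBxi.s0r, one_mul]

theorem SBxi.c_ii {i j : Fin (n - 1)} (h : (i : ℕ) + 1 < (j : ℕ) ∨ (j : ℕ) + 1 < (i : ℕ)) :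
    ξσInv i * ξσInv j = ξσInv j * ξσInv i := by
  calc ξσInv i * ξσInv j
      = ξσInv i * ξσInv j * (ξσ i * ξσInv i) := by rw [SBxi.s0l, mul_one]
    _ = ξσInv i * (ξσInv j * ξσ i) * ξσInv i := by simp [mul_assoc]
    _ = ξσInv i * (ξσ i * ξσInv j) * ξσInv i := by rw [SBxi.c_is h.symm]
    _ = (ξσInv i * ξσ i) * (ξσInv j * ξσInv i) := by simp [mul_assoc]
    _ = ξσInv j * ξσInv i := by rw [SBxi.s0r, one_mul]

theorem SBxi.sigInv_braid {i j : Fin (n - 1)}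
    (h : (i : ℕ) + 1 = (j : ℕ) ∨ (j : ℕ) + 1 = (i : ℕ)) :
    ξσ i * ξσ j * ξσInv i = ξσInv j * ξσ i * ξσ j := by
  calc ξσ i * ξσ j * ξσInv i
      = (ξσInv j * ξσ j) * (ξσ i * ξσ j) * ξσInv i := by rw [SBxi.s0r, one_mul]
    _ = ξσInv j * (ξσ j * ξσ i * ξσ j) * ξσInv i := by simp [mul_assoc]
    _ = ξσInv j * (ξσ i * ξσ j * ξσ i) * ξσInv i := by rw [SBxi.b_ss h.symm]
    _ = ξσInv j * ξσ i * ξσ j * (ξσ i * ξσInv i) := by simp [mul_assoc]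
    _ = ξσInv j * ξσ i * ξσ j := by rw [SBxi.s0l, mul_one]

end Aux

/-- The assignment `σ_i ↦ σ_i`, `σ̄_i ↦ σ̄_i`, `ξ_i ↦ σ_i τ_i` extends to a
monoid isomorphism `SB_n^ξ ≅ SB_n`; that is, `SB n` admits the same presentation with the
elements `ξ_i := σ_i τ_i` used as generators in place of the `τ_i`. -/
theorem SBxi.exists_mulEquiv_SB (n : ℕ) (hn : 1 ≤ n) :
    ∃ e : SBxi n ≃* SB n,
      (∀ i : Fin (n - 1), e (ξσ i) = σ i) ∧
      (∀ i : Fin (n - 1), e (ξσInv i) = σInv i) ∧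
      (∀ i : Fin (n - 1), e (ξ i) = σ i * τ i) := by
  classical
  -- forward map on generators
  let fF : SBxiGen n → SB n := fun g => match g with
    | SBxiGen.sig i => σ i
    | SBxiGen.sigInv i => σInv i
    | SBxiGen.xi i => σ i * τ i
  have hF : ∀ a b : FreeMonoid (SBxiGen n), SBxiRel n a b →
      FreeMonoid.lift fF a = FreeMonoid.lift fF b := by
    intro a b r
    cases r with
    | br0_left i => simp [fF, SBxiGen.s, SBxiGen.si, SB.s0l]
    | br0_right i => simp [fF, SBxiGen.s, SBxiGen.si, SB.s0r]
    | br1_ss i j h => simp [fF, SBxiGen.s, SB.c_ss h]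
    | br1_sx i j h =>
        simp only [map_mul, FreeMonoid.lift_eval_of, SBxiGen.s, SBxiGen.x, fF]
        calc σ i * (σ j * τ j) = (σ i * σ j) * τ j := by rw [mul_assoc]
          _ = (σ j * σ i) * τ j := by rw [SB.c_ss h]
          _ = σ j * (σ i * τ j) := by rw [mul_assoc]
          _ = σ j * (τ j * σ i) := by rw [SB.c_st h]
          _ = σ j * τ j * σ i := by rw [mul_assoc]
    | br1_xx i j h =>
        simp only [map_mul, FreeMonoid.lift_eval_of, SBxiGen.x, fF]
        calc σ i * τ i * (σ j * τ j)
            = σ i * (τ i * σ j) * τ j := by simp [mul_assoc]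
          _ = σ i * (σ j * τ i) * τ j := by rw [← SB.c_st h.symm]
          _ = (σ i * σ j) * (τ i * τ j) := by simp [mul_assoc]
          _ = (σ j * σ i) * (τ j * τ i) := by rw [SB.c_ss h, SB.c_tt h]
          _ = σ j * (σ i * τ j) * τ i := by simp [mul_assoc]
          _ = σ j * (τ j * σ i) * τ i := by rw [SB.c_st h]
          _ = σ j * τ j * (σ i * τ i) := by simp [mul_assoc]
    | br2_ss i j h => simp [fF, SBxiGen.s, SB.b_ss h]
    | br2_sx i j h =>
        simp only [map_mul, FreeMonoid.lift_eval_of, SBxiGen.s, SBxiGen.x, fF]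
        calc σ i * σ j * (σ i * τ i)
            = σ i * σ j * (τ i * σ i) := by rw [SB.fr]
          _ = (σ i * σ j * τ i) * σ i := by simp [mul_assoc]
          _ = (τ j * σ i * σ j) * σ i := by rw [SB.b_st h]
          _ = τ j * (σ i * σ j * σ i) := by simp [mul_assoc]
          _ = τ j * (σ j * σ i * σ j) := by rw [SB.b_ss h]
          _ = (τ j * σ j) * (σ i * σ j) := by simp [mul_assoc]
          _ = (σ j * τ j) * (σ i * σ j) := by rw [← SB.fr]
          _ = σ j * τ j * σ i * σ j := by simp [mul_assoc]
    | brF i =>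
        simp only [map_mul, FreeMonoid.lift_eval_of, SBxiGen.s, SBxiGen.x, fF]
        calc σ i * (σ i * τ i) = σ i * (τ i * σ i) := by rw [SB.fr]
          _ = (σ i * τ i) * σ i := by rw [mul_assoc]
  -- backward map on generators
  let gF : SBGen n → SBxi n := fun g => match g with
    | SBGen.sig i => ξσ i
    | SBGen.sigInv i => ξσInv i
    | SBGen.tau i => ξσInv i * ξ i
  have hG : ∀ a b : FreeMonoid (SBGen n), SBRel n a b →
      FreeMonoid.lift gF a = FreeMonoid.lift gF b := by
    intro a b r
    cases r with
    | br0_left i => simp [gF, SBGen.s, SBGen.si, SBxi.s0l]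
    | br0_right i => simp [gF, SBGen.s, SBGen.si, SBxi.s0r]
    | br1_ss i j h => simp [gF, SBGen.s, SBxi.c_ss h]
    | br1_st i j h =>
        simp only [map_mul, FreeMonoid.lift_eval_of, SBGen.s, SBGen.t, gF]
        calc ξσ i * (ξσInv j * ξ j)
            = (ξσ i * ξσInv j) * ξ j := by rw [mul_assoc]
          _ = (ξσInv j * ξσ i) * ξ j := by rw [← SBxi.c_is h.symm]
          _ = ξσInv j * (ξσ i * ξ j) := by rw [mul_assoc]
          _ = ξσInv j * (ξ j * ξσ i) := by rw [SBxi.c_sx h]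
          _ = ξσInv j * ξ j * ξσ i := by rw [mul_assoc]
    | br1_tt i j h =>
        simp only [map_mul, FreeMonoid.lift_eval_of, SBGen.t, gF]
        calc ξσInv i * ξ i * (ξσInv j * ξ j)
            = ξσInv i * (ξ i * ξσInv j) * ξ j := by simp [mul_assoc]
          _ = ξσInv i * (ξσInv j * ξ i) * ξ j := by rw [← SBxi.c_ix h.symm]
          _ = (ξσInv i * ξσInv j) * (ξ i * ξ j) := by simp [mul_assoc]
          _ = (ξσInv j * ξσInv i) * (ξ j * ξ i) := by rw [SBxi.c_ii h, SBxi.c_xx h]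
          _ = ξσInv j * (ξσInv i * ξ j) * ξ i := by simp [mul_assoc]
          _ = ξσInv j * (ξ j * ξσInv i) * ξ i := by rw [SBxi.c_ix h]
          _ = ξσInv j * ξ j * (ξσInv i * ξ i) := by simp [mul_assoc]
    | br2_ss i j h => simp [gF, SBGen.s, SBxi.b_ss h]
    | br2_st i j h =>
        simp only [map_mul, FreeMonoid.lift_eval_of, SBGen.s, SBGen.t, gF]
        calc ξσ i * ξσ j * (ξσInv i * ξ i)
            = (ξσ i * ξσ j * ξσInv i) * ξ i := by simp [mul_assoc]
          _ = (ξσInv j * ξσ i * ξσ j) * ξ i := by rw [SBxi.sigInv_braid h]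
          _ = ξσInv j * (ξσ i * ξσ j * ξ i) := by simp [mul_assoc]
          _ = ξσInv j * (ξ j * ξσ i * ξσ j) := by rw [SBxi.b_sx h]
          _ = ξσInv j * ξ j * ξσ i * ξσ j := by simp [mul_assoc]
    | brF i =>
        simp only [map_mul, FreeMonoid.lift_eval_of, SBGen.s, SBGen.t, gF]
        calc ξσ i * (ξσInv i * ξ i)
            = (ξσ i * ξσInv i) * ξ i := by rw [mul_assoc]
          _ = ξ i := by rw [SBxi.s0l, one_mul]
          _ = (ξσInv i * ξσ i) * ξ i := by rw [SBxi.s0r, one_mul]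
          _ = ξσInv i * (ξσ i * ξ i) := by rw [mul_assoc]
          _ = ξσInv i * (ξ i * ξσ i) := by rw [SBxi.fr]
          _ = ξσInv i * ξ i * ξσ i := by rw [mul_assoc]
  let F : SBxi n →* SB n := PresentedMonoid.lift fF hF
  let G : SB n →* SBxi n := PresentedMonoid.lift gF hG
  have hGF : G.comp F = MonoidHom.id (SBxi n) := by
    apply PresentedMonoid.ext
    intro x
    cases x with
    | sig i => rfl
    | sigInv i => rfl
    | xi i =>
        show G (F (ξ i)) = ξ i
        have : F (ξ i) = σ i * τ i := rfl
        rw [this, map_mul]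
        show ξσ i * (ξσInv i * ξ i) = ξ i
        rw [← mul_assoc, SBxi.s0l, one_mul]
  have hFG : F.comp G = MonoidHom.id (SB n) := by
    apply PresentedMonoid.ext
    intro x
    cases x with
    | sig i => rfl
    | sigInv i => rfl
    | tau i =>
        show F (G (τ i)) = τ i
        have : G (τ i) = ξσInv i * ξ i := rfl
        rw [this, map_mul]
        show σInv i * (σ i * τ i) = τ i
        rw [← mul_assoc, SB.s0r, one_mul]
  exact ⟨F.toMulEquiv G hGF hFG, fun i => rfl, fun i => rfl, fun i => rfl⟩
end
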